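/- Let $L_e = \{y + te : 0 \leq t \leq 1\}$ be a unit line segment in $\mathbb{R}^n$, let $T_e^\delta$ be its closed $\delta$-neighbourhood, and let $B$ be a ball of diameter at least $\delta$ with $L_e \cap B \neq \emptyset$. Then $\frac{1}{\mathcal{H}^n(T_e^\delta)} \int_{T_e^\delta} \chi_{2B} \, d\mathcal{H}^n \geq c(n) \int_{L_e} \chi_{B} \, d\mathcal{H}^1$ for a constant $c(n) > 0$ depending only on $n$. -/

import Mathlib

open Set Metric MeasureTheory Pointwise ENNReal NNReal

/-- The unit line segment from `y` in direction `e`. -/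
def seg {n : ℕ} (e y : EuclideanSpace ℝ (Fin n)) : Set (EuclideanSpace ℝ (Fin n)) :=
  (fun t : ℝ => y + t • e) '' Set.Icc (0:ℝ) 1

/-- The closed `δ`-tube around the unit segment from `y` in direction `e`. -/
def tube {n : ℕ} (δ : ℝ) (e y : EuclideanSpace ℝ (Fin n)) : Set (EuclideanSpace ℝ (Fin n)) :=
  Metric.cthickening δ (seg e y)

lemma aux_ball (n : ℕ) (hn : 1 ≤ n) (z : EuclideanSpace ℝ (Fin n)) {s : ℝ} (hs : 0 ≤ s) :
    μH[(n:ℝ)] (Metric.closedBall z s)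
      = ENNReal.ofReal s ^ n * μH[(n:ℝ)] (Metric.closedBall (0 : EuclideanSpace ℝ (Fin n)) 1) := by
  rcases eq_or_lt_of_le hs with rfl | hs'
  · have hA : NoAtoms (μH[(n:ℝ)] : Measure (EuclideanSpace ℝ (Fin n))) :=
      MeasureTheory.Measure.noAtoms_hausdorff _ (by exact_mod_cast Nat.pos_of_ne_zero (by omega))
    simp [Metric.closedBall_zero, measure_singleton, zero_pow (by omega : n ≠ 0)]
    exact hA.measure_singleton 0
  · set e := IsometryEquiv.constVAdd (G := EuclideanSpace ℝ (Fin n)) (X := EuclideanSpace ℝ (Fin n)) z with he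
    have h1 : Metric.closedBall z s = e '' Metric.closedBall 0 s := by
      rw [e.image_closedBall]
      simp [he]
    have h2 : Metric.closedBall (0 : EuclideanSpace ℝ (Fin n)) s
        = s • Metric.closedBall (0 : EuclideanSpace ℝ (Fin n)) 1 := by
      rw [smul_closedBall (𝕜 := ℝ) s 0 zero_le_one]
      simp [Real.norm_of_nonneg hs]
    rw [h1, e.hausdorffMeasure_image, h2,
      MeasureTheory.Measure.hausdorffMeasure_smul₀ (by positivity) (ne_of_gt hs')]
    rw [ENNReal.smul_def, smul_eq_mul]
    congr 1
    rw [ENNReal.coe_rpow_of_nonneg _ (by positivity),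
      (show ((‖s‖₊ : ℝ≥0) : ℝ≥0∞) = ENNReal.ofReal s from Real.enorm_eq_ofReal hs), ENNReal.rpow_natCast]

lemma aux_C (n : ℕ) (hn : 1 ≤ n) :
    μH[(n:ℝ)] (Metric.closedBall (0 : EuclideanSpace ℝ (Fin n)) 1) ≠ 0 ∧
    μH[(n:ℝ)] (Metric.closedBall (0 : EuclideanSpace ℝ (Fin n)) 1) ≠ ⊤ := by
  set F := WithLp.equiv 2 (Fin n → ℝ) with hF
  have hL : LipschitzWith 1 ⇑F := PiLp.lipschitzWith_ofLp 2 _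
  have hA : AntilipschitzWith ((Fintype.card (Fin n) : ℝ≥0) ^ ((1:ℝ≥0∞) / 2).toReal) ⇑F :=
    PiLp.antilipschitzWith_ofLp 2 _
  set K : ℝ≥0 := (Fintype.card (Fin n) : ℝ≥0) ^ ((1:ℝ≥0∞) / 2).toReal with hK
  have hKpos : 0 < K := by
    apply NNReal.rpow_pos
    simp only [Fintype.card_fin]
    exact_mod_cast Nat.pos_of_ne_zero (by omega)
  have hpi : (μH[(n:ℝ)] : Measure (Fin n → ℝ)) = volume := by
    simpa using (MeasureTheory.hausdorffMeasure_pi_real (ι := Fin n))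
  have hF0 : F 0 = 0 := rfl
  constructor
  · -- positivity
    intro h0
    have h1 : μH[(n:ℝ)] (F '' Metric.closedBall 0 1) ≤ (1:ℝ≥0) ^ (n:ℝ) * μH[(n:ℝ)] (Metric.closedBall (0 : EuclideanSpace ℝ (Fin n)) 1) :=
      hL.hausdorffMeasure_image_le (by positivity) _
    rw [h0, mul_zero, le_zero_iff, hpi] at h1
    have hsub : Metric.closedBall (0 : Fin n → ℝ) ((K:ℝ)⁻¹) ⊆ F '' Metric.closedBall 0 1 := by
      intro v hv
      refine ⟨F.symm v, ?_, F.apply_symm_apply v⟩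
      rw [Metric.mem_closedBall] at hv ⊢
      have := hA.le_mul_dist (F.symm v) 0
      rw [F.apply_symm_apply, hF0] at this
      calc dist (F.symm v) 0 ≤ K * dist v 0 := this
        _ ≤ K * (K:ℝ)⁻¹ := by
            apply mul_le_mul_of_nonneg_left hv (by positivity)
        _ = 1 := mul_inv_cancel₀ (by positivity)
    have hvol : volume (Metric.closedBall (0 : Fin n → ℝ) ((K:ℝ)⁻¹)) = 0 :=
      le_antisymm (le_trans (measure_mono hsub) h1.le) (zero_le)
    rw [Real.volume_pi_closedBall _ (by positivity)] at hvol
    simp only [Fintype.card_fin] at hvol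
    have : (0:ℝ) < (2 * (K:ℝ)⁻¹) ^ n := by positivity
    rw [ENNReal.ofReal_eq_zero] at hvol
    linarith
  · -- finiteness
    intro htop
    have h1 : μH[(n:ℝ)] (Metric.closedBall (0 : EuclideanSpace ℝ (Fin n)) 1)
        ≤ (K:ℝ≥0∞) ^ (n:ℝ) * μH[(n:ℝ)] (F '' Metric.closedBall 0 1) :=
      hA.le_hausdorffMeasure_image (by positivity) _
    have hsub : F '' Metric.closedBall 0 1 ⊆ Metric.closedBall (0 : Fin n → ℝ) 1 := by
      rintro v ⟨w, hw, rfl⟩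
      rw [Metric.mem_closedBall] at hw ⊢
      calc dist (F w) 0 = dist (F w) (F 0) := by rw [hF0]
        _ ≤ 1 * dist w 0 := hL.dist_le_mul w 0
        _ ≤ 1 := by rw [one_mul]; exact hw
    have h2 : μH[(n:ℝ)] (F '' Metric.closedBall 0 1) ≤ volume (Metric.closedBall (0 : Fin n → ℝ) 1) := by
      rw [← hpi]; exact measure_mono hsub
    rw [Real.volume_pi_closedBall _ zero_le_one] at h2
    have hfin : (K:ℝ≥0∞) ^ (n:ℝ) * μH[(n:ℝ)] (F '' Metric.closedBall 0 1) < ⊤ := by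
      apply ENNReal.mul_lt_top
      · exact ENNReal.rpow_lt_top_of_nonneg (by positivity) ENNReal.coe_ne_top
      · exact lt_of_le_of_lt h2 ENNReal.ofReal_lt_top
    rw [htop] at h1
    exact (lt_irrefl _ (lt_of_le_of_lt h1 hfin)).elim

set_option maxHeartbeats 1000000 in
/-- The average of `χ_{2B}` over the `δ`-tube dominates (up to a dimensional constant)
the length of the segment inside `B`, when `B` has diameter at least `δ` and meets the segment. -/
theorem stmt8 (n : ℕ) (hn : 1 ≤ n) :
    ∃ c : ℝ, 0 < c ∧
      ∀ (e y x : EuclideanSpace ℝ (Fin n)) (δ r : ℝ), ‖e‖ = 1 → 0 < δ → δ ≤ 2 * r →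
        (seg e y ∩ Metric.closedBall x r).Nonempty →
        ENNReal.ofReal c * μH[1] (seg e y ∩ Metric.closedBall x r) ≤
          μH[(n : ℝ)] (tube δ e y ∩ Metric.closedBall x (2 * r)) / μH[(n : ℝ)] (tube δ e y) := by
  obtain ⟨hC0, hCtop⟩ := aux_C n hn
  set C := μH[(n:ℝ)] (Metric.closedBall (0 : EuclideanSpace ℝ (Fin n)) 1) with hCdef
  refine ⟨1 / (2 * 10 ^ n), by positivity, ?_⟩
  intro e y x δ r he hδ hδr hne
  have hr : 0 < r := by linarith
  set g : ℝ → EuclideanSpace ℝ (Fin n) := fun t => y + t • e with hg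
  have hgiso : Isometry g := by
    apply Isometry.of_dist_eq
    intro t s
    simp only [hg]
    rw [dist_add_left, dist_eq_norm, ← sub_smul, norm_smul, he, mul_one,
      Real.norm_eq_abs, Real.dist_eq]
  have hseg : seg e y = g '' Icc 0 1 := rfl
  have hgaff : g = ⇑(AffineMap.lineMap (k := ℝ) y (y + e)) := by
    funext t
    simp only [hg, AffineMap.lineMap_apply, vsub_eq_sub, vadd_eq_add, add_sub_cancel_left]
    exact add_comm y (t • e)
  set I : Set ℝ := Icc (0:ℝ) 1 ∩ g ⁻¹' Metric.closedBall x r with hIdef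
  have hIconv : Convex ℝ I := by
    apply Convex.inter (convex_Icc 0 1)
    rw [hgaff]
    exact (convex_closedBall x r).affine_preimage _
  have hIcomp : IsCompact I :=
    isCompact_Icc.inter_right (Metric.isClosed_closedBall.preimage hgiso.continuous)
  have hIne : I.Nonempty := by
    obtain ⟨z, hz1, hz2⟩ := hne
    rw [hseg] at hz1
    obtain ⟨t, ht, rfl⟩ := hz1
    exact ⟨t, ht, hz2⟩
  set a := sInf I with hadef
  set b := sSup I with hbdef
  have hIcc : I = Icc a b := eq_Icc_of_connected_compact ⟨hIne, hIconv.isPreconnected⟩ hIcomp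
  have ha : a ∈ I := hIcomp.sInf_mem hIne
  have hb : b ∈ I := hIcomp.sSup_mem hIne
  have ha0 : 0 ≤ a := ha.1.1
  have hb1 : b ≤ 1 := hb.1.2
  have hab : a ≤ b := (hIcc ▸ hb).1
  set L := b - a with hLdef
  have hL0 : 0 ≤ L := by simp [hLdef]; linarith
  have hL1 : L ≤ 1 := by simp [hLdef]; linarith
  have hS : seg e y ∩ Metric.closedBall x r = g '' Icc a b := by
    rw [hseg, ← Set.image_inter_preimage, ← hIdef, hIcc]
  have hμ1 : μH[1] (seg e y ∩ Metric.closedBall x r) = ENNReal.ofReal L := by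
    rw [hS, hgiso.hausdorffMeasure_image (Or.inl zero_le_one),
      MeasureTheory.hausdorffMeasure_real, Real.volume_Icc]
  have hsegsub : ∀ t ∈ Icc (0:ℝ) 1, g t ∈ seg e y := fun t ht => ⟨t, ht, rfl⟩
  set N := ⌊1/δ⌋₊ with hNdef
  set k := ⌊2*L/δ⌋₊ with hkdef
  -- upper bound for the tube measure
  have hTle : μH[(n:ℝ)] (tube δ e y)
      ≤ (N+1 : ℕ) * (ENNReal.ofReal (2*δ) ^ n * C) := by
    have hcov : tube δ e y ⊆ ⋃ i ∈ Finset.range (N+1), Metric.closedBall (g (i * δ)) (2*δ) := by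
      intro z hz
      rw [tube, Metric.mem_cthickening_iff] at hz
      have hcomp : IsCompact (seg e y) := by
        rw [hseg]; exact isCompact_Icc.image hgiso.continuous
      obtain ⟨p, hp, hdp⟩ := hcomp.exists_infEdist_eq_edist ⟨g 0, hsegsub 0 (by norm_num)⟩ z
      rw [hdp] at hz
      have hdzp : dist z p ≤ δ := (edist_le_ofReal hδ.le).1 hz
      rw [hseg] at hp
      obtain ⟨t, ht, rfl⟩ := hp
      have hfl1 : (⌊t/δ⌋₊ : ℝ) ≤ t/δ := Nat.floor_le (div_nonneg ht.1 hδ.le)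
      refine Set.mem_iUnion₂.2 ⟨⌊t/δ⌋₊, ?_, ?_⟩
      · rw [Finset.mem_range, Nat.lt_succ_iff]
        apply Nat.floor_le_floor
        exact div_le_div_of_nonneg_right ht.2 hδ.le
      · rw [Metric.mem_closedBall]
        have h1 : (⌊t/δ⌋₊ : ℝ) * δ ≤ t := by
          rw [← le_div_iff₀ hδ] at *
          exact hfl1
        have h2 : t - (⌊t/δ⌋₊ : ℝ) * δ ≤ δ := by
          have h3 := Nat.lt_floor_add_one (t/δ)
          have h4 : t < ((⌊t/δ⌋₊ : ℝ) + 1) * δ := by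
            rw [← div_lt_iff₀ hδ] at *
            exact h3
          nlinarith
        calc dist z (g ((⌊t/δ⌋₊ : ℝ) * δ))
            ≤ dist z (g t) + dist (g t) (g ((⌊t/δ⌋₊ : ℝ) * δ)) := dist_triangle _ _ _
          _ ≤ δ + δ := by
              apply add_le_add hdzp
              rw [hgiso.dist_eq, Real.dist_eq, abs_of_nonneg (by linarith)]
              linarith
          _ = 2*δ := by ring
    calc μH[(n:ℝ)] (tube δ e y)
        ≤ ∑ i ∈ Finset.range (N+1), μH[(n:ℝ)] (Metric.closedBall (g (i * δ)) (2*δ)) :=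
          (measure_mono hcov).trans (measure_biUnion_finset_le _ _)
      _ = (N+1 : ℕ) * (ENNReal.ofReal (2*δ) ^ n * C) := by
          rw [Finset.sum_congr rfl (fun i _ => aux_ball n hn _ (by linarith)),
            Finset.sum_const, Finset.card_range, nsmul_eq_mul]
  have hT0 : μH[(n:ℝ)] (tube δ e y) ≠ 0 := by
    have hsub : Metric.closedBall y δ ⊆ tube δ e y := by
      have hy : y ∈ seg e y := by
        have := hsegsub 0 ⟨le_refl _, zero_le_one⟩
        simpa [hg] using this
      exact closedBall_subset_cthickening hy δ
    have hmono := measure_mono (μ := μH[(n:ℝ)]) hsub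
    rw [aux_ball n hn y hδ.le] at hmono
    intro h
    rw [h, le_zero_iff] at hmono
    have : ENNReal.ofReal δ ^ n * C ≠ 0 :=
      mul_ne_zero (pow_ne_zero _ (by simp [ENNReal.ofReal_eq_zero]; linarith)) hC0
    exact this hmono
  have hTtop : μH[(n:ℝ)] (tube δ e y) ≠ ⊤ := by
    apply ne_top_of_le_ne_top ?_ hTle
    apply ENNReal.mul_ne_top (ENNReal.natCast_ne_top _)
    exact ENNReal.mul_ne_top (pow_ne_top ENNReal.ofReal_ne_top) hCtop
  -- lower bound for the intersection measure via disjoint balls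
  have hk2L : (k:ℝ) * (δ/2) ≤ L := by
    have h := Nat.floor_le (show (0:ℝ) ≤ 2*L/δ by positivity)
    rw [le_div_iff₀ hδ] at h
    linarith
  have hmem : ∀ i, i ∈ Finset.range (k+1) → (a + (i:ℝ)*(δ/2)) ∈ I := by
    intro i hi
    rw [Finset.mem_range, Nat.lt_succ_iff] at hi
    have hik : (i:ℝ) ≤ (k:ℝ) := by exact_mod_cast hi
    rw [hIcc]
    constructor
    · nlinarith
    · have : (i:ℝ)*(δ/2) ≤ L := le_trans (by nlinarith) hk2L
      simp only [hLdef] at this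
      linarith
  have hdisj : (↑(Finset.range (k+1)) : Set ℕ).PairwiseDisjoint
      (fun i : ℕ => Metric.closedBall (g (a + (i:ℝ)*(δ/2))) (δ/5)) := by
    intro i _ j _ hij
    apply closedBall_disjoint_closedBall
    have hd : dist (g (a + (i:ℝ)*(δ/2))) (g (a + (j:ℝ)*(δ/2))) = |(i:ℝ) - j| * (δ/2) := by
      rw [hgiso.dist_eq, Real.dist_eq]
      rw [show a + (i:ℝ)*(δ/2) - (a + (j:ℝ)*(δ/2)) = ((i:ℝ) - j) * (δ/2) by ring,
        abs_mul, abs_of_nonneg (by linarith : (0:ℝ) ≤ δ/2)]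
    have hij' : (i:ℤ) ≠ (j:ℤ) := by exact_mod_cast hij
    have h1 : (1:ℤ) ≤ |(i:ℤ) - (j:ℤ)| := Int.one_le_abs (sub_ne_zero.2 hij')
    have hij1 : (1:ℝ) ≤ |(i:ℝ) - (j:ℝ)| := by exact_mod_cast h1
    rw [hd]
    nlinarith
  have hsub2 : (⋃ i ∈ Finset.range (k+1), Metric.closedBall (g (a + (i:ℝ)*(δ/2))) (δ/5))
      ⊆ tube δ e y ∩ Metric.closedBall x (2*r) := by
    apply Set.iUnion₂_subset
    intro i hi
    have hti := hmem i hi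
    apply Set.subset_inter
    · apply subset_trans (closedBall_subset_closedBall (by linarith : δ/5 ≤ δ))
      exact closedBall_subset_cthickening (hsegsub _ hti.1) δ
    · apply closedBall_subset_closedBall'
      have : dist (g (a + (i:ℝ)*(δ/2))) x ≤ r := Metric.mem_closedBall.1 hti.2
      linarith
  have hA : ((k+1 : ℕ) : ℝ≥0∞) * (ENNReal.ofReal (δ/5) ^ n * C)
      ≤ μH[(n:ℝ)] (tube δ e y ∩ Metric.closedBall x (2*r)) := by
    calc ((k+1 : ℕ) : ℝ≥0∞) * (ENNReal.ofReal (δ/5) ^ n * C)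
        = ∑ i ∈ Finset.range (k+1), μH[(n:ℝ)] (Metric.closedBall (g (a + (i:ℝ)*(δ/2))) (δ/5)) := by
          rw [Finset.sum_congr rfl (fun i _ => aux_ball n hn _ (by linarith)),
            Finset.sum_const, Finset.card_range, nsmul_eq_mul]
      _ = μH[(n:ℝ)] (⋃ i ∈ Finset.range (k+1), Metric.closedBall (g (a + (i:ℝ)*(δ/2))) (δ/5)) :=
          (measure_biUnion_finset hdisj (fun i _ => measurableSet_closedBall)).symm
      _ ≤ μH[(n:ℝ)] (tube δ e y ∩ Metric.closedBall x (2*r)) := measure_mono hsub2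
  -- put everything together
  rw [hμ1, ENNReal.le_div_iff_mul_le (Or.inl hT0) (Or.inl hTtop)]
  have hreal : (1/(2*10^n)) * L * (((N+1 : ℕ):ℝ) * (2*δ)^n) ≤ ((k+1 : ℕ):ℝ) * (δ/5)^n := by
    have hN1 : (N:ℝ) * δ ≤ 1 := by
      have h := Nat.floor_le (show (0:ℝ) ≤ 1/δ by positivity)
      rw [← hNdef] at h
      rw [le_div_iff₀ hδ] at h
      exact h
    have hk2 : 2*L ≤ ((k:ℝ)+1)*δ := by
      have h := Nat.lt_floor_add_one (2*L/δ)
      rw [← hkdef, div_lt_iff₀ hδ] at h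
      linarith
    have hk1 : (1:ℝ) ≤ (k:ℝ)+1 := by have : (0:ℝ) ≤ (k:ℝ) := Nat.cast_nonneg k; linarith
    have hmain : L * ((N:ℝ)+1) ≤ 2*((k:ℝ)+1) := by nlinarith
    have h10 : (10:ℝ)^n = 2^n * 5^n := by rw [← mul_pow]; norm_num
    push_cast
    calc 1/(2*10^n) * L * (((N:ℝ)+1) * (2*δ)^n)
        = (L * ((N:ℝ)+1)) * (δ^n * (1/(2*5^n))) := by rw [mul_pow, h10]; field_simp
      _ ≤ (2*((k:ℝ)+1)) * (δ^n * (1/(2*5^n))) := by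
          apply mul_le_mul_of_nonneg_right hmain (by positivity)
      _ = ((k:ℝ)+1) * (δ/5)^n := by rw [div_pow]; field_simp
  have hkey2 : ENNReal.ofReal (1/(2*10^n)) * ENNReal.ofReal L * (((N+1 : ℕ):ℝ≥0∞) * ENNReal.ofReal (2*δ)^n)
      ≤ ((k+1 : ℕ):ℝ≥0∞) * ENNReal.ofReal (δ/5)^n := by
    rw [← ENNReal.ofReal_natCast (N+1), ← ENNReal.ofReal_natCast (k+1),
      ← ENNReal.ofReal_pow (by linarith : (0:ℝ) ≤ 2*δ), ← ENNReal.ofReal_pow (by linarith : (0:ℝ) ≤ δ/5),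
      ← ENNReal.ofReal_mul (by positivity), ← ENNReal.ofReal_mul (by positivity),
      ← ENNReal.ofReal_mul (by positivity), ← ENNReal.ofReal_mul (by positivity)]
    exact ENNReal.ofReal_le_ofReal hreal
  calc ENNReal.ofReal (1/(2*10^n)) * ENNReal.ofReal L * μH[(n:ℝ)] (tube δ e y)
      ≤ ENNReal.ofReal (1/(2*10^n)) * ENNReal.ofReal L * ((N+1 : ℕ) * (ENNReal.ofReal (2*δ) ^ n * C)) :=
        mul_le_mul_right hTle _
    _ = (ENNReal.ofReal (1/(2*10^n)) * ENNReal.ofReal L * (((N+1 : ℕ):ℝ≥0∞) * ENNReal.ofReal (2*δ)^n)) * C := by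
        ring
    _ ≤ (((k+1 : ℕ):ℝ≥0∞) * ENNReal.ofReal (δ/5)^n) * C := mul_le_mul_left hkey2 C
    _ = ((k+1 : ℕ):ℝ≥0∞) * (ENNReal.ofReal (δ/5)^n * C) := by ring
    _ ≤ μH[(n:ℝ)] (tube δ e y ∩ Metric.closedBall x (2*r)) := hA
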